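/- For the cone S over the rational normal curve of degree 4 in ℙ⁴ (Pinkham's example), with the natural grading on Ω^i_{S,0} (with dx_j of degree 0), the graded Euler characteristic evaluated at t = 1 of (Ω•_{S,0}, ∧dℓ) for generic linear ℓ equals 13; since the radial index of dℓ is 3, the invariant ν(S,0) = 13 − 3 = 10. -/
import Mathlib


/-- Coefficients of the Poincaré series P₀(t) = 1 + 5t + 9t² + 13t³ + … (coefficient
4k+1 in degree k ≥ 1) of the graded module Ω⁰_{S,0} = 𝒪_{S,0} for the cone S over the
rational normal curve of degree 4 in ℙ⁴ (the dx_j are given degree 0). -/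
def pinkhamP0 : ℕ → ℤ := fun k => if k = 0 then 1 else 4 * k + 1

/-- Coefficients of P₁(t) = 5 + 19t + 24t² + 32t³ + … (coefficient 8k+8 for k ≥ 2)
of the graded module Ω¹_{S,0}. -/
def pinkhamP1 : ℕ → ℤ := fun k => if k = 0 then 5 else if k = 1 then 19 else 8 * k + 8

/-- Coefficients of P₂(t) = 10 + 21t + 15t² + 19t³ + … (coefficient 4k+7 for k ≥ 2)
of the graded module Ω²_{S,0}. -/
def pinkhamP2 : ℕ → ℤ := fun k => if k = 0 then 10 else if k = 1 then 21 else 4 * k + 7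

lemma pinkham_support :
    (Function.support fun k : ℕ => pinkhamP0 k - pinkhamP1 k + pinkhamP2 k)
      ⊆ ↑({0, 1} : Finset ℕ) := by
  intro k hk
  simp only [Function.mem_support] at hk
  by_contra h
  simp only [Finset.coe_insert, Finset.coe_singleton, Set.mem_insert_iff,
    Set.mem_singleton_iff, not_or] at h
  apply hk
  unfold pinkhamP0 pinkhamP1 pinkhamP2
  rw [if_neg h.1, if_neg h.1, if_neg h.2, if_neg h.1, if_neg h.2]
  ring

/- STATEMENT 17: For the cone S over the rational normal curve of degree 4 in ℙ⁴
(Pinkham's example) and a generic linear function ℓ on ℂ⁵, the differentials of the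
complex (Ω•_{S,0}, ∧dℓ) preserve the grading, so its Euler characteristic — the
homological index Ind_hom(dℓ) — equals (P₀(t) − P₁(t) + P₂(t))|_{t→1}, summed
coefficientwise (the sum is finite since the coefficients cancel for k ≥ 2), and this
value is 13; since the radial index of dℓ equals the Milnor number μ(ℓ|_S) = 3, the
invariant ν(S,0) = Ind_hom(dℓ) − Ind_rad(dℓ) = 13 − 3 = 10. -/
theorem pinkham_cone_homological_index_and_nu
    (IndHom IndRad ν : ℤ)
    (h_IndHom : IndHom = ∑ᶠ k : ℕ, (pinkhamP0 k - pinkhamP1 k + pinkhamP2 k))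
    (h_IndRad : IndRad = 3)
    (h_ν : ν = IndHom - IndRad) :
    IndHom = 13 ∧ ν = 10 := by
  have hI : IndHom = 13 := by
    rw [h_IndHom, finsum_eq_finset_sum_of_support_subset _ pinkham_support]
    decide
  exact ⟨hI, by omega⟩
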